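/- Let K̃ be a symmetric positive definite n×n matrix and S ∈ ℝ^{n×i} have full column rank, and let C̃ = S (S^T K̃ S)^{-1} S^T. Then K̃^{-1} - C̃ is positive semidefinite. -/

import Mathlib

open Matrix

/-- Let `K̃` be symmetric positive definite `n×n` and `S` an `n×i` matrix of full column
rank, and `C̃ = S (Sᵀ K̃ S)⁻¹ Sᵀ`. Then `K̃⁻¹ - C̃` is positive semidefinite. -/
theorem inv_sub_lowrank_posSemidef {n i : Type*} [Fintype n] [DecidableEq n]
    [Fintype i] [DecidableEq i]
    (Kt : Matrix n n ℝ) (hKt : Kt.PosDef)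
    (S : Matrix n i ℝ) (hS : S.rank = Fintype.card i)
    (C : Matrix n n ℝ) (hC : C = S * (Sᵀ * Kt * S)⁻¹ * Sᵀ) :
    (Kt⁻¹ - C).PosSemidef := by
  subst hC
  -- S has injective mulVec
  have hSinj : Function.Injective S.mulVec := by
    have hker : LinearMap.ker S.mulVecLin = ⊥ := by
      have h1 := S.mulVecLin.finrank_range_add_finrank_ker
      rw [show Module.finrank ℝ (LinearMap.range S.mulVecLin) = S.rank from rfl, hS,
        Module.finrank_pi] at h1
      have : Module.finrank ℝ (LinearMap.ker S.mulVecLin) = 0 := by omega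
      exact Submodule.finrank_eq_zero.mp this
    have := LinearMap.ker_eq_bot.mp hker
    simpa [Matrix.mulVecLin_apply, Function.Injective] using this
  -- G := Sᵀ Kt S is positive definite
  set G := Sᵀ * Kt * S with hGdef
  have hG : G.PosDef := by
    refine PosDef.of_dotProduct_mulVec_pos ?_ ?_
    · show Gᴴ = G
      simp [hGdef, conjTranspose_mul, Matrix.mul_assoc, (show Ktᵀ = Kt from hKt.isHermitian)]
    · intro x hx
      have hSx : S *ᵥ x ≠ 0 := fun h => hx (hSinj (by simpa using h))
      have h2 := hKt.dotProduct_mulVec_pos hSx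
      simpa [hGdef, ← mulVec_mulVec, dotProduct_mulVec, vecMul_transpose] using h2
  haveI : Invertible G := hG.isUnit.invertible
  -- square root of Kt
  obtain ⟨M, hMH, hMM⟩ : ∃ M : Matrix n n ℝ, Mᴴ = M ∧ M * M = Kt := by
    open scoped MatrixOrder in
    exact ⟨CFC.sqrt Kt, (CFC.sqrt_nonneg Kt).posSemidef.1, CFC.sqrt_mul_sqrt_self Kt hKt.posSemidef.nonneg⟩
  have hMunit : IsUnit M := by
    rw [Matrix.isUnit_iff_isUnit_det]
    have hdet : M.det * M.det = Kt.det := by rw [← det_mul, hMM]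
    have hKdet := hKt.det_pos
    refine isUnit_iff_ne_zero.mpr fun h => ?_
    rw [h, mul_zero] at hdet
    exact hKdet.ne' hdet.symm
  haveI : Invertible M := hMunit.invertible
  have hMl : M⁻¹ * M = 1 := inv_mul_of_invertible M
  have hMr : M * M⁻¹ = 1 := mul_inv_of_invertible M
  have hMinvH : (M⁻¹)ᴴ = M⁻¹ := by rw [conjTranspose_nonsing_inv, hMH]
  have hGinvH : (G⁻¹)ᴴ = G⁻¹ := by rw [conjTranspose_nonsing_inv, hG.1.eq]
  -- the projection
  set P := M * S * G⁻¹ * Sᵀ * M with hPdef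
  have hPH : Pᴴ = P := by
    simp [hPdef, conjTranspose_mul, (show Mᵀ = M from hMH), (show G⁻¹ᵀ = G⁻¹ from hGinvH), Matrix.mul_assoc]
  have hPP : P * P = P := by
    have : Sᵀ * (M * (M * (S * (G⁻¹ * (Sᵀ * M))))) = G * (G⁻¹ * (Sᵀ * M)) := by
      rw [← Matrix.mul_assoc M M, hMM, hGdef]
      simp [Matrix.mul_assoc]
    simp only [hPdef, Matrix.mul_assoc, this]
    rw [← Matrix.mul_assoc G, mul_inv_of_invertible, Matrix.one_mul]
  have key : Kt⁻¹ - S * G⁻¹ * Sᵀ = ((1 - P) * M⁻¹)ᴴ * ((1 - P) * M⁻¹) := by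
    have hQH : (1 - P)ᴴ = 1 - P := by simp [(show Pᵀ = P from hPH)]
    have hQQ : (1 - P) * (1 - P) = 1 - P := by
      rw [Matrix.mul_sub, Matrix.sub_mul, Matrix.sub_mul, hPP]; simp
    have hrhs : ((1 - P) * M⁻¹)ᴴ * ((1 - P) * M⁻¹)
        = M⁻¹ * ((1 - P) * M⁻¹) := by
      rw [conjTranspose_mul, hQH, hMinvH, Matrix.mul_assoc,
        ← Matrix.mul_assoc (1 - P) (1 - P) M⁻¹, hQQ]
    rw [hrhs, Matrix.sub_mul, Matrix.mul_sub, Matrix.one_mul]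
    congr 1
    · rw [← Matrix.mul_inv_rev, hMM]
    · rw [hPdef]
      simp only [Matrix.mul_assoc]
      rw [hMr, ← Matrix.mul_assoc M⁻¹ M, hMl]
      simp [Matrix.mul_assoc]
  rw [key]
  exact posSemidef_conjTranspose_mul_self _
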